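/- Let n be a natural number. For a C¹ function M : ℝⁿ → Matrix (Fin n) (Fin n) ℝ taking symmetric values and a C¹ function h : ℝⁿ → ℝ, define the simple Hamiltonian H : ℝⁿ × ℝⁿ → ℝ by H(q,p) = ½ ∑_{i,j} p_i M^{ij}(q) p_j + h(q); similarly define Ĥ from symmetric C¹ matrix-valued M̂ and C¹ function ĥ. Define the canonical Poisson bracket {Ĥ,H}(q,p) = ∑_i (∂Ĥ/∂q^i ∂H/∂p_i − ∂H/∂q^i ∂Ĥ/∂p_i). Suppose there are given: a family of subspaces W(q) ⊆ ℝⁿ (for q ∈ ℝⁿ), a function μ : ℝⁿ × ℝⁿ → ℝ with μ(q,p) ≥ 0 for all (q,p), and a map y : ℝⁿ × ℝⁿ → ℝⁿ such that for all (q,p): y(q,p) ∈ W(q) and ⟨y(q,p), M̂(q)p⟩ = −μ(q,p) − {Ĥ,H}(q,p), where ⟨·,·⟩ is the Euclidean inner product. Then for every q ∈ ℝⁿ and every σ ∈ ℝⁿ such that M̂(q)σ is Euclidean-orthogonal to W(q), one has {Ĥ,H}(q,σ) = 0. -/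

import Mathlib

open scoped BigOperators

/-- The simple Hamiltonian `H(q,p) = ½ ∑_{i,j} pᵢ M^{ij}(q) pⱼ + h(q)` on `ℝⁿ × ℝⁿ`. -/
noncomputable def simpleHam (n : ℕ) (M : (Fin n → ℝ) → Matrix (Fin n) (Fin n) ℝ)
    (h : (Fin n → ℝ) → ℝ) : (Fin n → ℝ) × (Fin n → ℝ) → ℝ :=
  fun x => (1 / 2) * (∑ i, ∑ j, x.2 i * M x.1 i j * x.2 j) + h x.1

/-- The canonical Poisson bracket
`{F,G}(q,p) = ∑ᵢ (∂F/∂qⁱ ∂G/∂pᵢ − ∂G/∂qⁱ ∂F/∂pᵢ)` on `ℝⁿ × ℝⁿ`. -/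
noncomputable def poissonBracket (n : ℕ) (F G : (Fin n → ℝ) × (Fin n → ℝ) → ℝ)
    (x : (Fin n → ℝ) × (Fin n → ℝ)) : ℝ :=
  ∑ i, (fderiv ℝ F x (Pi.single i 1, 0) * fderiv ℝ G x (0, Pi.single i 1)
      - fderiv ℝ G x (Pi.single i 1, 0) * fderiv ℝ F x (0, Pi.single i 1))

lemma fderiv_simpleHam (n : ℕ) (M : (Fin n → ℝ) → Matrix (Fin n) (Fin n) ℝ)
    (h : (Fin n → ℝ) → ℝ)
    (hM : ∀ i j, ContDiff ℝ 1 fun q => M q i j) (hh : ContDiff ℝ 1 h)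
    (q p u v : Fin n → ℝ) :
    fderiv ℝ (simpleHam n M h) (q, p) (u, v) =
      (1 / 2) * (∑ i, ∑ j, (v i * M q i j * p j
        + p i * fderiv ℝ (fun q => M q i j) q u * p j
        + p i * M q i j * v j)) + fderiv ℝ h q u := by
  have hq : ∀ i j, HasFDerivAt (fun x : (Fin n → ℝ) × (Fin n → ℝ) => M x.1 i j)
      ((fderiv ℝ (fun q => M q i j) q).comp (ContinuousLinearMap.fst ℝ _ _)) (q, p) :=
    fun i j => by
      have h1 := (((hM i j).differentiable (by norm_num)) q).hasFDerivAt
      exact h1.comp (q, p) (hasFDerivAt_fst (p := (q, p)) (𝕜 := ℝ))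
  have hcoord : ∀ i, HasFDerivAt (fun x : (Fin n → ℝ) × (Fin n → ℝ) => x.2 i)
      ((ContinuousLinearMap.proj i).comp (ContinuousLinearMap.snd ℝ _ _)) (q, p) :=
    fun i => ((ContinuousLinearMap.proj i).comp (ContinuousLinearMap.snd ℝ
      (Fin n → ℝ) (Fin n → ℝ))).hasFDerivAt
  have hterm : ∀ i j, HasFDerivAt
      (fun x : (Fin n → ℝ) × (Fin n → ℝ) => x.2 i * M x.1 i j * x.2 j)
      _ (q, p) := fun i j => ((hcoord i).fun_mul (hq i j)).mul (hcoord j)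
  have hsum : HasFDerivAt
      (fun x : (Fin n → ℝ) × (Fin n → ℝ) => ∑ i, ∑ j, x.2 i * M x.1 i j * x.2 j)
      _ (q, p) := HasFDerivAt.fun_sum (fun i _ => HasFDerivAt.fun_sum (fun j _ => hterm i j))
  have hhp : HasFDerivAt (fun x : (Fin n → ℝ) × (Fin n → ℝ) => h x.1)
      ((fderiv ℝ h q).comp (ContinuousLinearMap.fst ℝ _ _)) (q, p) :=
    ((hh.differentiable one_ne_zero) q).hasFDerivAt.comp (q, p) hasFDerivAt_fst
  have hH : HasFDerivAt (simpleHam n M h) _ (q, p) := (hsum.const_mul (1/2)).add hhp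
  rw [hH.fderiv]
  simp only [ContinuousLinearMap.add_apply, ContinuousLinearMap.smul_apply,
    ContinuousLinearMap.comp_apply, ContinuousLinearMap.sum_apply,
    ContinuousLinearMap.coe_fst', ContinuousLinearMap.coe_snd',
    ContinuousLinearMap.proj_apply, smul_eq_mul]
  ring_nf
  rw [add_comm]
  congr 1
  congr 1
  refine Finset.sum_congr rfl fun i _ => ?_
  refine Finset.sum_congr rfl fun j _ => ?_
  ring

lemma fderiv_simpleHam_q_even (n : ℕ) (M : (Fin n → ℝ) → Matrix (Fin n) (Fin n) ℝ)
    (h : (Fin n → ℝ) → ℝ)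
    (hM : ∀ i j, ContDiff ℝ 1 fun q => M q i j) (hh : ContDiff ℝ 1 h)
    (q σ u : Fin n → ℝ) :
    fderiv ℝ (simpleHam n M h) (q, -σ) (u, 0) =
      fderiv ℝ (simpleHam n M h) (q, σ) (u, 0) := by
  rw [fderiv_simpleHam n M h hM hh, fderiv_simpleHam n M h hM hh]
  congr 2
  refine Finset.sum_congr rfl fun i _ => Finset.sum_congr rfl fun j _ => ?_
  simp only [Pi.neg_apply, Pi.zero_apply]
  ring

lemma fderiv_simpleHam_p_odd (n : ℕ) (M : (Fin n → ℝ) → Matrix (Fin n) (Fin n) ℝ)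
    (h : (Fin n → ℝ) → ℝ)
    (hM : ∀ i j, ContDiff ℝ 1 fun q => M q i j) (hh : ContDiff ℝ 1 h)
    (q σ v : Fin n → ℝ) :
    fderiv ℝ (simpleHam n M h) (q, -σ) (0, v) =
      - fderiv ℝ (simpleHam n M h) (q, σ) (0, v) := by
  rw [fderiv_simpleHam n M h hM hh, fderiv_simpleHam n M h hM hh]
  simp only [map_zero, neg_add_rev, add_zero, neg_zero]
  rw [neg_mul_eq_mul_neg, ← Finset.sum_neg_distrib]
  congr 1
  refine Finset.sum_congr rfl fun i _ => ?_
  rw [← Finset.sum_neg_distrib]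
  refine Finset.sum_congr rfl fun j _ => ?_
  simp only [Pi.neg_apply]
  ring

lemma poissonBracket_odd (n : ℕ) (M Mhat : (Fin n → ℝ) → Matrix (Fin n) (Fin n) ℝ)
    (h hhat : (Fin n → ℝ) → ℝ)
    (hM : ∀ i j, ContDiff ℝ 1 fun q => M q i j)
    (hMhat : ∀ i j, ContDiff ℝ 1 fun q => Mhat q i j)
    (hh : ContDiff ℝ 1 h) (hhhat : ContDiff ℝ 1 hhat) (q σ : Fin n → ℝ) :
    poissonBracket n (simpleHam n Mhat hhat) (simpleHam n M h) (q, -σ) =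
      - poissonBracket n (simpleHam n Mhat hhat) (simpleHam n M h) (q, σ) := by
  unfold poissonBracket
  rw [← Finset.sum_neg_distrib]
  refine Finset.sum_congr rfl fun i _ => ?_
  rw [fderiv_simpleHam_q_even n M h hM hh, fderiv_simpleHam_q_even n Mhat hhat hMhat hhhat,
    fderiv_simpleHam_p_odd n M h hM hh, fderiv_simpleHam_p_odd n Mhat hhat hMhat hhhat]
  ring

/-- if the Lyapunov constraint equation
`⟨y(q,p), M̂(q)p⟩ = −μ(q,p) − {Ĥ,H}(q,p)` with `y(q,p) ∈ W(q)` and `μ ≥ 0` has a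
solution, then `{Ĥ,H}(q,σ) = 0` whenever `M̂(q)σ` is Euclidean-orthogonal to `W(q)`. -/
theorem poisson_bracket_vanishes_on_orthogonal
    (n : ℕ)
    (M Mhat : (Fin n → ℝ) → Matrix (Fin n) (Fin n) ℝ)
    (h hhat : (Fin n → ℝ) → ℝ)
    (hM : ∀ i j, ContDiff ℝ 1 fun q => M q i j)
    (hMhat : ∀ i j, ContDiff ℝ 1 fun q => Mhat q i j)
    (hMsymm : ∀ q i j, M q i j = M q j i)
    (hMhatsymm : ∀ q i j, Mhat q i j = Mhat q j i)
    (hh : ContDiff ℝ 1 h) (hhhat : ContDiff ℝ 1 hhat)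
    (W : (Fin n → ℝ) → Submodule ℝ (Fin n → ℝ))
    (μ : (Fin n → ℝ) × (Fin n → ℝ) → ℝ)
    (y : (Fin n → ℝ) × (Fin n → ℝ) → (Fin n → ℝ))
    (hμ : ∀ x, 0 ≤ μ x)
    (hyW : ∀ x, y x ∈ W x.1)
    (hy : ∀ x, (∑ i, y x i * (Mhat x.1).mulVec x.2 i)
        = -μ x - poissonBracket n (simpleHam n Mhat hhat) (simpleHam n M h) x) :
    ∀ (q σ : Fin n → ℝ),
      (∀ w ∈ W q, (∑ i, (Mhat q).mulVec σ i * w i) = 0) →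
      poissonBracket n (simpleHam n Mhat hhat) (simpleHam n M h) (q, σ) = 0 := by
  intro q σ horth
  set B := fun p => poissonBracket n (simpleHam n Mhat hhat) (simpleHam n M h) (q, p) with hB
  have e1 : (∑ i, y (q, σ) i * (Mhat q).mulVec σ i) = 0 := by
    rw [← horth _ (hyW (q, σ))]
    exact Finset.sum_congr rfl fun i _ => mul_comm _ _
  have e2 : (∑ i, y (q, -σ) i * (Mhat q).mulVec (-σ) i) = 0 := by
    have : ∀ i, (Mhat q).mulVec (-σ) i = -((Mhat q).mulVec σ i) := by
      intro i; rw [Matrix.mulVec_neg]; rfl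
    calc (∑ i, y (q, -σ) i * (Mhat q).mulVec (-σ) i)
        = -∑ i, (Mhat q).mulVec σ i * y (q, -σ) i := by
          rw [← Finset.sum_neg_distrib]
          exact Finset.sum_congr rfl fun i _ => by rw [this i]; ring
      _ = 0 := by rw [horth _ (hyW (q, -σ))]; ring
  have h1 := hy (q, σ)
  have h2 := hy (q, -σ)
  rw [e1] at h1
  rw [e2] at h2
  have hodd := poissonBracket_odd n M Mhat h hhat hM hMhat hh hhhat q σ
  have hμ1 := hμ (q, σ)
  have hμ2 := hμ (q, -σ)
  rw [hodd] at h2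
  linarith
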